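/- Fix ε ∈ (0,1) and let L be an r-dimensional subspace of the tensor space C^{n1×...×nd} spanned by r orthonormal tensors T_1, ..., T_r. If a linear map L₀ into C^{m1×...×m_{d'}} is an (ε/4r)-JL embedding of the 2r² - r tensors consisting of {T_k - T_h, T_k + T_h, T_k - iT_h, T_k + iT_h : 1 ≤ h < k ≤ r} together with {T_k : k ∈ [r]}, then |‖L₀(X)‖² - ‖X‖²| ≤ ε‖X‖² holds for all X ∈ L. -/

import Mathlib

open scoped BigOperators

/-- Squared Euclidean (Frobenius) norm of a tensor. -/
noncomputable def tnsq {ι : Type*} [Fintype ι] (X : ι → ℂ) : ℝ := ∑ i, ‖X i‖ ^ 2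

/-- Tensor inner product `⟨X, Y⟩ = Σ X_i conj(Y_i)`. -/
noncomputable def ttip {ι : Type*} [Fintype ι] (X Y : ι → ℂ) : ℂ :=
  ∑ i, X i * (starRingEnd ℂ) (Y i)

/-- A linear map `L₀` between tensor spaces is an `ε`-JL embedding of a set `S` of tensors
if `‖L₀(X)‖² = (1 + ε_X)‖X‖²` with `ε_X ∈ (-ε, ε)` for all `X ∈ S`. -/
def IsJLmap {ι κ : Type*} [Fintype ι] [Fintype κ] (ε : ℝ)
    (L₀ : (ι → ℂ) →ₗ[ℂ] (κ → ℂ)) (S : Set (ι → ℂ)) : Prop :=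
  ∀ X ∈ S, ∃ e ∈ Set.Ioo (-ε) ε, tnsq (L₀ X) = (1 + e) * tnsq X

/-- If `L₀` is an `(ε/4r)`-JL embedding of the tensors `T_k ± T_h`, `T_k ± i T_h`
(`h < k`) together with the `T_k`, where `T_1, …, T_r` are orthonormal, then
`|‖L₀(X)‖² - ‖X‖²| ≤ ε‖X‖²` for every `X` in the span of the `T_k`. -/
lemma ttip_self {ι : Type*} [Fintype ι] (X : ι → ℂ) : ttip X X = (tnsq X : ℂ) := by
  simp [ttip, tnsq, Complex.mul_conj, ← Complex.sq_norm]

lemma tnsq_eq_re {ι : Type*} [Fintype ι] (X : ι → ℂ) : tnsq X = (ttip X X).re := by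
  rw [ttip_self]; simp

lemma ttip_conj {ι : Type*} [Fintype ι] (X Y : ι → ℂ) :
    ttip Y X = (starRingEnd ℂ) (ttip X Y) := by
  simp [ttip, map_sum, map_mul, mul_comm]

lemma ttip_add_smul {ι : Type*} [Fintype ι] (c : ℂ) (A B : ι → ℂ) :
    ttip (A + c • B) (A + c • B)
      = ttip A A + (starRingEnd ℂ) c * ttip A B + c * ttip B A
        + c * (starRingEnd ℂ) c * ttip B B := by
  simp only [ttip, Pi.add_apply, Pi.smul_apply, smul_eq_mul, map_add, map_mul,
    Finset.mul_sum, ← Finset.sum_add_distrib]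
  exact Finset.sum_congr rfl fun i _ => by ring

lemma ttip_sum_left {ι : Type*} [Fintype ι] {r : ℕ} (c : Fin r → ℂ) (U : Fin r → ι → ℂ)
    (Y : ι → ℂ) : ttip (∑ k, c k • U k) Y = ∑ k, c k * ttip (U k) Y := by
  simp only [ttip, Finset.sum_apply, Pi.smul_apply, smul_eq_mul, Finset.sum_mul, Finset.mul_sum]
  rw [Finset.sum_comm]
  exact Finset.sum_congr rfl fun k _ => Finset.sum_congr rfl fun i _ => by ring

lemma ttip_sum_right {ι : Type*} [Fintype ι] {r : ℕ} (c : Fin r → ℂ) (U : Fin r → ι → ℂ)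
    (X : ι → ℂ) : ttip X (∑ h, c h • U h) = ∑ h, (starRingEnd ℂ) (c h) * ttip X (U h) := by
  simp only [ttip, Finset.sum_apply, Pi.smul_apply, smul_eq_mul, map_sum, map_mul,
    Finset.mul_sum]
  rw [Finset.sum_comm]
  exact Finset.sum_congr rfl fun k _ => Finset.sum_congr rfl fun i _ => by ring

lemma ttip_sum_sum {ι : Type*} [Fintype ι] {r : ℕ} (c : Fin r → ℂ) (U : Fin r → ι → ℂ) :
    ttip (∑ k, c k • U k) (∑ k, c k • U k)
      = ∑ k, ∑ h, c k * (starRingEnd ℂ) (c h) * ttip (U k) (U h) := by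
  rw [ttip_sum_left]
  refine Finset.sum_congr rfl fun k _ => ?_
  rw [ttip_sum_right, Finset.mul_sum]
  exact Finset.sum_congr rfl fun h _ => by ring

theorem jl_orthonormal_subspace_embedding {d d' r : ℕ} {n : Fin d → ℕ} {md : Fin d' → ℕ}
    {ε : ℝ} (hε : ε ∈ Set.Ioo (0 : ℝ) 1)
    (T : Fin r → ((i : Fin d) → Fin (n i)) → ℂ)
    (hT : ∀ k h, ttip (T k) (T h) = if k = h then 1 else 0)
    (L₀ : (((i : Fin d) → Fin (n i)) → ℂ) →ₗ[ℂ] (((i : Fin d') → Fin (md i)) → ℂ))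
    (hJL : IsJLmap (ε / (4 * r)) L₀
      ({Z | ∃ k h : Fin r, h < k ∧
          (Z = T k - T h ∨ Z = T k + T h ∨
           Z = T k - Complex.I • T h ∨ Z = T k + Complex.I • T h)} ∪ Set.range T)) :
    ∀ X ∈ Submodule.span ℂ (Set.range T),
      |tnsq (L₀ X) - tnsq X| ≤ ε * tnsq X := by
  intro X hX
  obtain ⟨c, rfl⟩ := (Submodule.mem_span_range_iff_exists_fun ℂ).mp hX
  rcases Nat.eq_zero_or_pos r with hr | hr
  · subst hr
    simp [tnsq]
  set ε' := ε / (4 * r) with hε'def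
  have hr' : (0:ℝ) < r := by exact_mod_cast hr
  have hε' : 0 < ε' := div_pos hε.1 (by positivity)
  set G : Fin r → Fin r → ℂ := fun k h => ttip (L₀ (T k)) (L₀ (T h)) with hG
  -- expansion for pairs
  have expand : ∀ (a : ℂ), Complex.normSq a = 1 → ∀ k h : Fin r, k ≠ h →
      (T k + a • T h) ∈ ({Z | ∃ k h : Fin r, h < k ∧
          (Z = T k - T h ∨ Z = T k + T h ∨
           Z = T k - Complex.I • T h ∨ Z = T k + Complex.I • T h)} ∪ Set.range T) →
      ∃ e ∈ Set.Ioo (-ε') ε',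
        (G k k).re + (G h h).re + 2 * ((starRingEnd ℂ) a * G k h).re = 2 * (1 + e) := by
    intro a ha k h hkh hmem
    obtain ⟨e, he, heq⟩ := hJL _ hmem
    refine ⟨e, he, ?_⟩
    have h0 : ttip (T k) (T h) = 0 := by rw [hT]; simp [hkh]
    have h0' : ttip (T h) (T k) = 0 := by rw [hT]; simp [hkh.symm]
    have haa : a * (starRingEnd ℂ) a = 1 := by
      rw [Complex.mul_conj, ha]; norm_num
    have hnorm : tnsq (T k + a • T h) = 2 := by
      rw [tnsq_eq_re, ttip_add_smul, h0, h0', hT k k, hT h h, haa]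
      norm_num
    have hL : tnsq (L₀ (T k + a • T h))
        = (G k k).re + (G h h).re + 2 * ((starRingEnd ℂ) a * G k h).re := by
      have hmap : L₀ (T k + a • T h) = L₀ (T k) + a • L₀ (T h) := by
        simp [map_add, map_smul]
      rw [tnsq_eq_re, hmap, ttip_add_smul, haa, one_mul]
      have hGhk : ttip (L₀ (T h)) (L₀ (T k)) = (starRingEnd ℂ) (G k h) := ttip_conj _ _
      have hconj : a * (starRingEnd ℂ) (G k h)
          = (starRingEnd ℂ) ((starRingEnd ℂ) a * G k h) := by
        rw [map_mul, RingHomCompTriple.comp_apply]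
        simp
      rw [hGhk, hconj]
      simp only [Complex.add_re, Complex.conj_re]
      ring
    rw [heq, hnorm] at hL
    linarith [hL]
  -- real part bound
  have hre : ∀ k h : Fin r, h < k → |(G k h).re| ≤ ε' := by
    intro k h hlt
    obtain ⟨e1, he1, H1⟩ := expand 1 (by simp) k h hlt.ne'
      (Or.inl ⟨k, h, hlt, Or.inr (Or.inl (by rw [one_smul]))⟩)
    obtain ⟨e2, he2, H2⟩ := expand (-1) (by simp) k h hlt.ne'
      (Or.inl ⟨k, h, hlt, Or.inl (by rw [neg_smul, one_smul, ← sub_eq_add_neg])⟩)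
    simp only [map_one, one_mul, map_neg, neg_mul, Complex.neg_re] at H1 H2
    rw [abs_le]
    constructor <;> [nlinarith [he1.1, he2.2]; nlinarith [he1.2, he2.1]]
  -- imaginary part bound
  have him : ∀ k h : Fin r, h < k → |(G k h).im| ≤ ε' := by
    intro k h hlt
    obtain ⟨e1, he1, H1⟩ := expand Complex.I (by simp) k h hlt.ne'
      (Or.inl ⟨k, h, hlt, Or.inr (Or.inr (Or.inr rfl))⟩)
    obtain ⟨e2, he2, H2⟩ := expand (-Complex.I) (by simp) k h hlt.ne'
      (Or.inl ⟨k, h, hlt, Or.inr (Or.inr (Or.inl (by rw [neg_smul, ← sub_eq_add_neg])))⟩)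
    simp only [map_neg, Complex.conj_I, neg_neg, neg_mul, Complex.neg_re,
      Complex.mul_re, Complex.neg_im, Complex.I_re, Complex.I_im] at H1 H2
    rw [abs_le]
    constructor <;> [nlinarith [he1.1, he2.2]; nlinarith [he1.2, he2.1]]
  -- the key uniform bound
  have key : ∀ k h : Fin r,
      ‖G k h - ttip (T k) (T h)‖ ≤ 2 * ε' := by
    have main : ∀ k h : Fin r, h < k → ‖G k h - ttip (T k) (T h)‖ ≤ 2 * ε' := by
      intro k h hlt
      rw [hT k h, if_neg hlt.ne', sub_zero]
      calc ‖G k h‖ ≤ |(G k h).re| + |(G k h).im| :=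
            Complex.norm_le_abs_re_add_abs_im _
        _ ≤ ε' + ε' := add_le_add (hre k h hlt) (him k h hlt)
        _ = 2 * ε' := by ring
    intro k h
    rcases lt_trichotomy h k with hlt | heq | hgt
    · exact main k h hlt
    · subst heq
      obtain ⟨e, he, heq⟩ := hJL (T h) (Or.inr ⟨h, rfl⟩)
      have h1 : tnsq (T h) = 1 := by rw [tnsq_eq_re, hT h h]; simp
      have h2 : G h h = (tnsq (L₀ (T h)) : ℂ) := ttip_self _
      rw [h2, hT h h, if_pos rfl, heq, h1, mul_one]
      have : ((1 + e : ℝ) : ℂ) - 1 = (e : ℝ) := by push_cast; ring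
      rw [this, Complex.norm_real, Real.norm_eq_abs]
      rw [abs_le]
      constructor <;> linarith [he.1, he.2, hε'.le]
    · have hGc : G k h = (starRingEnd ℂ) (G h k) := ttip_conj _ _
      rw [hT k h, if_neg hgt.ne, sub_zero, hGc, Complex.norm_conj]
      have := main h k hgt
      rwa [hT h k, if_neg hgt.ne', sub_zero] at this
  -- norms of X and L₀ X
  set X := ∑ k, c k • T k with hXdef
  have hXnorm : tnsq X = ∑ k, ‖c k‖ ^ 2 := by
    rw [tnsq_eq_re, ttip_sum_sum]
    simp only [hT, mul_ite, mul_one, mul_zero, Finset.sum_ite_eq, Finset.mem_univ,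
      if_true, Complex.mul_conj]
    rw [Complex.re_sum]
    simp [Complex.normSq_eq_norm_sq, ← Complex.ofReal_pow]
  have hdiff : tnsq (L₀ X) - tnsq X
      = (∑ k, ∑ h, c k * (starRingEnd ℂ) (c h) * (G k h - ttip (T k) (T h))).re := by
    rw [tnsq_eq_re, tnsq_eq_re, ← Complex.sub_re]
    congr 1
    have hmap : L₀ X = ∑ k, c k • L₀ (T k) := by simp [hXdef, map_sum, map_smul]
    rw [hmap, hXdef, ttip_sum_sum, ttip_sum_sum, ← Finset.sum_sub_distrib]
    refine Finset.sum_congr rfl fun k _ => ?_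
    rw [← Finset.sum_sub_distrib]
    exact Finset.sum_congr rfl fun h _ => by ring
  have hbound : |tnsq (L₀ X) - tnsq X| ≤ (∑ k, ‖c k‖) ^ 2 * (2 * ε') := by
    rw [hdiff]
    calc |(∑ k, ∑ h, c k * (starRingEnd ℂ) (c h) * (G k h - ttip (T k) (T h))).re|
        ≤ ‖∑ k, ∑ h, c k * (starRingEnd ℂ) (c h) * (G k h - ttip (T k) (T h))‖ :=
          Complex.abs_re_le_norm _
      _ ≤ ∑ k, ∑ h, ‖c k * (starRingEnd ℂ) (c h) * (G k h - ttip (T k) (T h))‖ := by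
          refine (norm_sum_le _ _).trans ?_
          exact Finset.sum_le_sum fun k _ => norm_sum_le _ _
      _ ≤ ∑ k, ∑ h, ‖c k‖ * ‖c h‖ * (2 * ε') := by
          refine Finset.sum_le_sum fun k _ => Finset.sum_le_sum fun h _ => ?_
          rw [norm_mul, norm_mul, Complex.norm_conj]
          exact mul_le_mul_of_nonneg_left (key k h)
            (by positivity)
      _ = (∑ k, ‖c k‖) ^ 2 * (2 * ε') := by
          rw [sq, Finset.sum_mul_sum, Finset.sum_mul]
          exact Finset.sum_congr rfl fun k _ => by
            rw [Finset.sum_mul]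
  have hCS : (∑ k, ‖c k‖) ^ 2 ≤ (r : ℝ) * tnsq X := by
    rw [hXnorm]
    have := sq_sum_le_card_mul_sum_sq (s := Finset.univ) (f := fun k : Fin r => ‖c k‖)
    simpa using this
  have htX : 0 ≤ tnsq X := Finset.sum_nonneg fun i _ => by positivity
  have hfinal : (r : ℝ) * tnsq X * (2 * ε') = ε / 2 * tnsq X := by
    rw [hε'def]
    field_simp
    ring
  calc |tnsq (L₀ X) - tnsq X| ≤ (∑ k, ‖c k‖) ^ 2 * (2 * ε') := hbound
    _ ≤ (r : ℝ) * tnsq X * (2 * ε') := by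
        exact mul_le_mul_of_nonneg_right hCS (by positivity)
    _ = ε / 2 * tnsq X := hfinal
    _ ≤ ε * tnsq X := by nlinarith [hε.1]
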